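/- Let (V,m,σ) be a Yang–Baxter algebra and ⋈_σ the quantum quasi-shuffle product on T(V). Then for any x ∈ V^{⊗i} with i ≥ 1, the difference x₁ ⋈_σ ⋯ ⋈_σ x_r − x₁ sh_σ ⋯ sh_σ x_r lies in ⊕_{k < n} V^{⊗k}, where x_j ∈ V^{⊗i_j} and n = i₁ + ⋯ + i_r; i.e., the quantum shuffle algebra is the associated graded algebra of the quantum quasi-shuffle algebra with respect to the filtration T(V)^{[n]} = ⊕_{k ≤ n} V^{⊗k}. -/

import Mathlib

open CategoryTheory MonoidalCategory TensorProduct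
noncomputable section
universe u
variable {K : Type u} [Field K]

def Tpow (M : ModuleCat.{u} K) : ℕ → ModuleCat.{u} K
  | 0 => ModuleCat.of K K
  | n+1 => Tpow M n ⊗ M

def sigR {M : ModuleCat.{u} K} (σ : M ⊗ M ⟶ M ⊗ M) : (n k : ℕ) → (Tpow M n ⟶ Tpow M n)
  | n+2, 0 => (α_ (Tpow M n) M M).hom ≫ (Tpow M n ◁ σ) ≫ (α_ (Tpow M n) M M).inv
  | n+1, k+1 => sigR σ n k ▷ M
  | _, _ => 𝟙 _

def sigAt {M : ModuleCat.{u} K} (σ : M ⊗ M ⟶ M ⊗ M) (n i : ℕ) : Tpow M n ⟶ Tpow M n :=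
  sigR σ n (n - 1 - i)

def asc {M : ModuleCat.{u} K} (σ : M ⊗ M ⟶ M ⊗ M) (n : ℕ) : (b l : ℕ) → (Tpow M n ⟶ Tpow M n)
  | _, 0 => 𝟙 _
  | b, l+1 => sigAt σ n b ≫ asc σ n (b+1) l

def blockT {M : ModuleCat.{u} K} (σ : M ⊗ M ⟶ M ⊗ M) : (i j n : ℕ) → (Tpow M n ⟶ Tpow M n)
  | 0, _, _ => 𝟙 _
  | i+1, j, n => asc σ n (i+1) j ≫ blockT σ i j n

/-- `T(V)` as the direct sum of the tensor powers. -/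
def TT (M : ModuleCat.{u} K) : Type u := DirectSum ℕ fun n => ↥(Tpow M n)

instance (M : ModuleCat.{u} K) : AddCommGroup (TT M) := by unfold TT; infer_instance
instance (M : ModuleCat.{u} K) : Module K (TT M) := by unfold TT; infer_instance

def TTc (M : ModuleCat.{u} K) : ModuleCat.{u} K := ModuleCat.of K (TT M)

/-- the inclusion of the `n`-th tensor power into `T(V)`. -/
def iotaT (M : ModuleCat.{u} K) (n : ℕ) : Tpow M n ⟶ TTc M :=
  ModuleCat.ofHom (DirectSum.lof K ℕ (fun k => ↥(Tpow M k)) n : ↥(Tpow M n) →ₗ[K] TT M)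

/-- concatenation on the right by one tensor factor, `T(V) ⊗ V → T(V)`. -/
def concatR (M : ModuleCat.{u} K) : TTc M ⊗ M ⟶ TTc M :=
  ModuleCat.ofHom ((DirectSum.toModule K ℕ (TT M) fun n =>
      (DirectSum.lof K ℕ (fun k => ↥(Tpow M k)) (n+1) :
        ↥(Tpow M n) ⊗[K] ↥M →ₗ[K] TT M)) ∘ₗ
    (TensorProduct.directSumLeft K K (fun n => ↥(Tpow M n)) ↥M).toLinearMap :
    ↥(TTc M ⊗ M) →ₗ[K] TT M)

/-- `σ ⊗ id` on `(M ⊗ M) ⊗ M`. -/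
def w1 {M : ModuleCat.{u} K} (σ : M ⊗ M ⟶ M ⊗ M) : (M ⊗ M) ⊗ M ⟶ (M ⊗ M) ⊗ M := σ ▷ M

/-- `id ⊗ σ` on `(M ⊗ M) ⊗ M`. -/
def w2 {M : ModuleCat.{u} K} (σ : M ⊗ M ⟶ M ⊗ M) : (M ⊗ M) ⊗ M ⟶ (M ⊗ M) ⊗ M :=
  (α_ M M M).hom ≫ (M ◁ σ) ≫ (α_ M M M).inv

/-- `m ⊗ id` on `(M ⊗ M) ⊗ M`. -/
def wm1 {M : ModuleCat.{u} K} (mm : M ⊗ M ⟶ M) : (M ⊗ M) ⊗ M ⟶ M ⊗ M := mm ▷ M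

/-- `id ⊗ m` on `(M ⊗ M) ⊗ M`. -/
def wm2 {M : ModuleCat.{u} K} (mm : M ⊗ M ⟶ M) : (M ⊗ M) ⊗ M ⟶ M ⊗ M :=
  (α_ M M M).hom ≫ (M ◁ mm)

/-- the canonical identification `V^{⊗i} ⊗ V^{⊗j} ≅ V^{⊗(i+j)}`. -/
def merge {M : ModuleCat.{u} K} (i : ℕ) : (j : ℕ) → (Tpow M i ⊗ Tpow M j ⟶ Tpow M (i+j))
  | 0 => (ρ_ (Tpow M i)).hom
  | j+1 => (α_ (Tpow M i) (Tpow M j) M).inv ≫ (merge i j ▷ M)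

/-- the product `x₁ · (x₂ · (⋯ · x_r))` of homogeneous elements, for a bilinear
product `μ` on `T(V)` (with empty product the unit `1 ∈ K = V^{⊗0}`). -/
def foldProd {M : ModuleCat.{u} K} (μ : TT M →ₗ[K] TT M →ₗ[K] TT M) :
    List (Σ n : ℕ, ↥(Tpow M n)) → TT M
  | [] => DirectSum.lof K ℕ (fun k => ↥(Tpow M k)) 0 (1 : K)
  | p :: L => μ (DirectSum.lof K ℕ (fun k => ↥(Tpow M k)) p.1 p.2) (foldProd μ L)

/-- the filtration `T(V)^{[<n]} = ⊕_{k<n} V^{⊗k}`. -/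
def filt (M : ModuleCat.{u} K) (n : ℕ) : Submodule K (TT M) :=
  ⨆ k, ⨆ _ : k < n, LinearMap.range (DirectSum.lof K ℕ (fun m => ↥(Tpow M m)) k)


section AuxStmt15
variable {M : ModuleCat.{u} K}

lemma mem_filt {k n : ℕ} (h : k < n) (y : ↥(Tpow M k)) :
    DirectSum.lof K ℕ (fun m => ↥(Tpow M m)) k y ∈ filt M n := by
  refine Submodule.mem_iSup_of_mem (M := TT M) k ?_
  refine Submodule.mem_iSup_of_mem h ?_
  exact ⟨y, rfl⟩

lemma filt_mono {n m : ℕ} (h : n ≤ m) : filt M n ≤ filt M m := by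
  refine iSup_mono fun k => ?_
  exact iSup_le fun hk => le_iSup_of_le (lt_of_lt_of_le hk h) le_rfl

lemma filt_induction {n : ℕ} {C : TT M → Prop} {x : TT M} (hx : x ∈ filt M n)
    (mem : ∀ k, k < n → ∀ y : ↥(Tpow M k),
      C (DirectSum.lof K ℕ (fun m => ↥(Tpow M m)) k y))
    (zero : C 0) (add : ∀ a b, C a → C b → C (a + b)) : C x := by
  refine Submodule.iSup_induction (motive := C) _ hx (fun k z hz => ?_) zero add
  refine Submodule.iSup_induction (motive := C) _ hz (fun hk w hw => ?_) zero add
  obtain ⟨y, rfl⟩ := hw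
  exact mem k hk y

lemma range_lof_eq {a b : ℕ} (h : a = b) :
    LinearMap.range (DirectSum.lof K ℕ (fun m => ↥(Tpow M m)) a)
      = LinearMap.range (DirectSum.lof K ℕ (fun m => ↥(Tpow M m)) b) := by
  subst h; rfl

lemma concatR_lof (k : ℕ) (y : ↥(Tpow M k)) (v : ↥M) :
    concatR M ((DirectSum.lof K ℕ (fun m => ↥(Tpow M m)) k y : TT M) ⊗ₜ[K] v)
      = DirectSum.lof K ℕ (fun m => ↥(Tpow M m)) (k+1) (y ⊗ₜ[K] v) := by
  unfold concatR
  erw [ModuleCat.ofHom_apply, LinearMap.comp_apply, LinearEquiv.coe_coe,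
    TensorProduct.directSumLeft_tmul_lof]
  exact DirectSum.toModule_lof K
    (φ := fun n => (DirectSum.lof K ℕ (fun m => ↥(Tpow M m)) (n+1) :
      ↥(Tpow M n) ⊗[K] ↥M →ₗ[K] TT M)) k (y ⊗ₜ[K] v)

lemma concatR_filt {c : ℕ} {t : TT M} (ht : t ∈ filt M c) (v : ↥M) :
    concatR M (t ⊗ₜ[K] v) ∈ filt M (c+1) := by
  refine filt_induction (C := fun t => concatR M (t ⊗ₜ[K] v) ∈ filt M (c+1)) ht
    (fun k hk y => ?_) ?_ (fun a b ha hb => ?_)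
  · dsimp only
    rw [concatR_lof]
    exact mem_filt (by omega) _
  · dsimp only
    erw [TensorProduct.zero_tmul, map_zero]
    exact zero_mem _
  · dsimp only
    erw [TensorProduct.add_tmul, map_add]
    exact add_mem ha hb

lemma concatR_range {n : ℕ} {t : TT M}
    (ht : t ∈ LinearMap.range (DirectSum.lof K ℕ (fun m => ↥(Tpow M m)) n)) (v : ↥M) :
    concatR M (t ⊗ₜ[K] v)
      ∈ LinearMap.range (DirectSum.lof K ℕ (fun m => ↥(Tpow M m)) (n+1)) := by
  obtain ⟨y, rfl⟩ := ht
  rw [concatR_lof]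
  exact ⟨_, rfl⟩

lemma tensor_concat_mem {A B : ModuleCat.{u} K} (f : A ⟶ TTc M) (g : B ⟶ M)
    (S T : Submodule K (TT M)) (h : ∀ x : ↥A, f x ∈ S)
    (hS : ∀ (t : TT M) (v : ↥M), t ∈ S → concatR M (t ⊗ₜ[K] v) ∈ T)
    (z : ↥(A ⊗ B)) : concatR M ((f ⊗ₘ g) z) ∈ T := by
  induction z using TensorProduct.induction_on with
  | zero => rw [map_zero, map_zero]; exact zero_mem _
  | tmul x y =>
      rw [ModuleCat.MonoidalCategory.tensorHom_tmul]
      exact hS _ _ (h x)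
  | add a b ha hb => rw [map_add, map_add]; exact add_mem ha hb

lemma sub_tensor_concat_mem {A B : ModuleCat.{u} K} (f f' : A ⟶ TTc M) (g : B ⟶ M)
    (S T : Submodule K (TT M)) (h : ∀ x : ↥A, f x - f' x ∈ S)
    (hS : ∀ (t : TT M) (v : ↥M), t ∈ S → concatR M (t ⊗ₜ[K] v) ∈ T)
    (z : ↥(A ⊗ B)) :
    concatR M ((f ⊗ₘ g) z) - concatR M ((f' ⊗ₘ g) z) ∈ T := by
  induction z using TensorProduct.induction_on with
  | zero => rw [map_zero, map_zero, map_zero, map_zero, sub_zero]; exact zero_mem _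
  | tmul x y =>
      rw [ModuleCat.MonoidalCategory.tensorHom_tmul,
        ModuleCat.MonoidalCategory.tensorHom_tmul, ← map_sub, ← TensorProduct.sub_tmul]
      exact hS _ _ (h x)
  | add a b ha hb =>
      rw [map_add, map_add, map_add, map_add]
      have hre : concatR M ((f ⊗ₘ g) a) + concatR M ((f ⊗ₘ g) b)
          - (concatR M ((f' ⊗ₘ g) a) + concatR M ((f' ⊗ₘ g) b))
          = (concatR M ((f ⊗ₘ g) a) - concatR M ((f' ⊗ₘ g) a))
            + (concatR M ((f ⊗ₘ g) b) - concatR M ((f' ⊗ₘ g) b)) := by abel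
      rw [hre]
      exact add_mem ha hb

end AuxStmt15

set_option maxHeartbeats 1000000 in
theorem stmt15 {M : ModuleCat.{u} K} (σ : M ⊗ M ⟶ M ⊗ M) (mm : M ⊗ M ⟶ M)
    (η : 𝟙_ (ModuleCat K) ⟶ M)
    -- `(M, mm, σ)` is a Yang–Baxter algebra:
    (hiso : IsIso σ)
    (hYB : w1 σ ≫ w2 σ ≫ w1 σ = w2 σ ≫ w1 σ ≫ w2 σ)
    (hassoc : wm1 mm ≫ mm = wm2 mm ≫ mm)
    (hc1 : w2 σ ≫ w1 σ ≫ wm2 mm = wm1 mm ≫ σ)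
    (hc2 : w1 σ ≫ w2 σ ≫ wm1 mm = wm2 mm ≫ σ)
    (hul : (λ_ M).inv ≫ (η ▷ M) ≫ mm = 𝟙 M)
    (hur : (ρ_ M).inv ≫ (M ◁ η) ≫ mm = 𝟙 M)
    (hσu1 : (λ_ M).inv ≫ (η ▷ M) ≫ σ = (ρ_ M).inv ≫ (M ◁ η))
    (hσu2 : (ρ_ M).inv ≫ (M ◁ η) ≫ σ = (λ_ M).inv ≫ (η ▷ M))
    -- `J i j` is the component `⋈_{σ(i,j)}` of the quantum quasi-shuffle product,
    -- characterized by the inductive formula (1):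
    (J : ∀ i j : ℕ, (Tpow M (i+j) ⟶ TTc M))
    (hJr : ∀ i : ℕ, J i 0 = iotaT M i)
    (hJl : ∀ j : ℕ, J 0 j
      = eqToHom (show Tpow M (0+j) = Tpow M j by rw [Nat.zero_add]) ≫ iotaT M j)
    (hJrec : ∀ i j : ℕ,
      J (i+1) (j+1) =
        (((J (i+1) j ⊗ₘ 𝟙 M) ≫ concatR M : Tpow M ((i+1)+(j+1)) ⟶ TTc M)) +
        (asc σ ((i+1)+(j+1)) (i+1) (j+1) ≫
          eqToHom (show Tpow M ((i+1)+(j+1)) = Tpow M (i+(j+1)) ⊗ M by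
            rw [show (i+1)+(j+1) = (i+(j+1))+1 by omega]; rfl) ≫
          (J i (j+1) ⊗ₘ 𝟙 M) ≫ concatR M) +
        (asc σ ((i+1)+(j+1)) (i+1) j ≫
          eqToHom (show Tpow M ((i+1)+(j+1)) = (Tpow M (i+j) ⊗ M) ⊗ M by
            rw [show (i+1)+(j+1) = ((i+j)+1)+1 by omega]; rfl) ≫
          (α_ (Tpow M (i+j)) M M).hom ≫ (J i j ⊗ₘ mm) ≫ concatR M))
    -- `Sh i j` is the component `ш_{σ(i,j)}` of the quantum shuffle product,
    -- characterized by the same inductive formula without the multiplication term: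
    (Sh : ∀ i j : ℕ, (Tpow M (i+j) ⟶ TTc M))
    (hSr : ∀ i : ℕ, Sh i 0 = iotaT M i)
    (hSl : ∀ j : ℕ, Sh 0 j
      = eqToHom (show Tpow M (0+j) = Tpow M j by rw [Nat.zero_add]) ≫ iotaT M j)
    (hSrec : ∀ i j : ℕ,
      Sh (i+1) (j+1) =
        (((Sh (i+1) j ⊗ₘ 𝟙 M) ≫ concatR M : Tpow M ((i+1)+(j+1)) ⟶ TTc M)) +
        (asc σ ((i+1)+(j+1)) (i+1) (j+1) ≫
          eqToHom (show Tpow M ((i+1)+(j+1)) = Tpow M (i+(j+1)) ⊗ M by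
            rw [show (i+1)+(j+1) = (i+(j+1))+1 by omega]; rfl) ≫
          (Sh i (j+1) ⊗ₘ 𝟙 M) ≫ concatR M))
    -- `μq` and `μs` are the quantum quasi-shuffle and quantum shuffle products on
    -- `T(V)`, i.e. the bilinear extensions of the `J i j` and `Sh i j`:
    (μq μs : TT M →ₗ[K] TT M →ₗ[K] TT M)
    (hμq : ∀ (i j : ℕ) (x : ↥(Tpow M i)) (y : ↥(Tpow M j)),
      μq (DirectSum.lof K ℕ (fun k => ↥(Tpow M k)) i x)
          (DirectSum.lof K ℕ (fun k => ↥(Tpow M k)) j y)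
        = J i j (merge i j (x ⊗ₜ[K] y)))
    (hμs : ∀ (i j : ℕ) (x : ↥(Tpow M i)) (y : ↥(Tpow M j)),
      μs (DirectSum.lof K ℕ (fun k => ↥(Tpow M k)) i x)
          (DirectSum.lof K ℕ (fun k => ↥(Tpow M k)) j y)
        = Sh i j (merge i j (x ⊗ₜ[K] y)))
    (hμq1 : ∀ x : TT M, μq x (DirectSum.lof K ℕ (fun k => ↥(Tpow M k)) 0 (1 : K)) = x)
    (hμs1 : ∀ x : TT M, μs x (DirectSum.lof K ℕ (fun k => ↥(Tpow M k)) 0 (1 : K)) = x) :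
    -- the quantum shuffle algebra is the associated graded of the quantum
    -- quasi-shuffle algebra: for homogeneous `x_t ∈ V^{⊗ i_t}` (`i_t ≥ 1`),
    -- `x₁ ⋈ ⋯ ⋈ x_r - x₁ ш ⋯ ш x_r ∈ ⊕_{k < i₁ + ⋯ + i_r} V^{⊗k}`.
    ∀ L : List (Σ n : ℕ, ↥(Tpow M n)), L ≠ [] → (∀ p ∈ L, 1 ≤ p.1) →
      foldProd μq L - foldProd μs L ∈ filt M ((L.map Sigma.fst).sum) := by
  -- notation
  have crange : ∀ (n : ℕ) (t : TT M) (v : ↥M),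
      t ∈ LinearMap.range (DirectSum.lof K ℕ (fun k => ↥(Tpow M k)) n) →
      concatR M (t ⊗ₜ[K] v)
        ∈ LinearMap.range (DirectSum.lof K ℕ (fun k => ↥(Tpow M k)) (n+1)) :=
    fun n t v ht => concatR_range ht v
  have cfilt : ∀ (c : ℕ) (t : TT M) (v : ↥M), t ∈ filt M c →
      concatR M (t ⊗ₜ[K] v) ∈ filt M (c+1) := fun c t v ht => concatR_filt ht v
  -- homogeneity of the shuffle components
  have hS1 : ∀ i j (x : ↥(Tpow M (i+j))),
      Sh i j x ∈ LinearMap.range (DirectSum.lof K ℕ (fun k => ↥(Tpow M k)) (i+j)) := by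
    intro i
    induction i with
    | zero =>
        intro j x
        rw [hSl j, range_lof_eq (Nat.zero_add j)]
        exact ⟨_, rfl⟩
    | succ i ih =>
        intro j
        induction j with
        | zero =>
            intro x
            rw [hSr]
            exact ⟨_, rfl⟩
        | succ j ihj =>
            intro x
            rw [hSrec i j]; simp only [ModuleCat.hom_add, LinearMap.add_apply]
            refine add_mem ?_ ?_
            · exact tensor_concat_mem (Sh (i+1) j) (𝟙 M) _ _ ihj (crange _) _
            · rw [range_lof_eq (show (i+1)+(j+1) = i+(j+1)+1 by omega)]
              exact tensor_concat_mem (Sh i (j+1)) (𝟙 M) _ _ (ih (j+1)) (crange _) _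
  -- the quasi-shuffle components land in the filtration of level `i+j+1`
  have hJ1 : ∀ i j (x : ↥(Tpow M (i+j))), J i j x ∈ filt M (i+j+1) := by
    intro i
    induction i with
    | zero =>
        intro j x
        rw [hJl j]
        exact mem_filt (M := M) (k := j) (n := 0+j+1) (by omega) _
    | succ i ih =>
        intro j
        induction j with
        | zero =>
            intro x
            rw [hJr]
            exact mem_filt (by omega) _
        | succ j ihj =>
            intro x
            rw [hJrec i j]; simp only [ModuleCat.hom_add, LinearMap.add_apply]
            refine add_mem (add_mem ?_ ?_) ?_
            · exact tensor_concat_mem (J (i+1) j) (𝟙 M) _ _ ihj (cfilt _) _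
            · refine filt_mono (show i+(j+1)+1+1 ≤ (i+1)+(j+1)+1 by omega) ?_
              exact tensor_concat_mem (J i (j+1)) (𝟙 M) _ _ (ih (j+1)) (cfilt _) _
            · refine filt_mono (show i+j+1+1 ≤ (i+1)+(j+1)+1 by omega) ?_
              exact tensor_concat_mem (J i j) mm _ _ (fun y => ih j y) (cfilt _) _
  -- the difference of the components lands in the filtration of level `i+j`
  have hD : ∀ i j (x : ↥(Tpow M (i+j))), J i j x - Sh i j x ∈ filt M (i+j) := by
    intro i
    induction i with
    | zero =>
        intro j x
        rw [hJl j, hSl j, sub_self]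
        exact zero_mem _
    | succ i ih =>
        intro j
        induction j with
        | zero =>
            intro x
            rw [hJr, hSr, sub_self]
            exact zero_mem _
        | succ j ihj =>
            intro x
            rw [hJrec i j, hSrec i j]; simp only [ModuleCat.hom_add, LinearMap.add_apply]
            have hre : ∀ a1 a2 a3 b1 b2 : TT M,
                a1 + a2 + a3 - (b1 + b2) = (a1 - b1) + (a2 - b2) + a3 := by
              intros; abel
            erw [hre]
            refine add_mem (add_mem ?_ ?_) ?_
            · exact sub_tensor_concat_mem (J (i+1) j) (Sh (i+1) j) (𝟙 M) _ _ ihj (cfilt _) _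
            · refine filt_mono (show i+(j+1)+1 ≤ (i+1)+(j+1) by omega) ?_
              exact sub_tensor_concat_mem (J i (j+1)) (Sh i (j+1)) (𝟙 M) _ _ (ih (j+1))
                (cfilt _) _
            · refine filt_mono (show i+j+1+1 ≤ (i+1)+(j+1) by omega) ?_
              exact tensor_concat_mem (J i j) mm _ _ (hJ1 i j) (cfilt _) _
  -- multiplying a homogeneous element by something in the filtration
  have hmul : ∀ (i : ℕ) (x : ↥(Tpow M i)) (n : ℕ) (t : TT M), t ∈ filt M n →
      μq (DirectSum.lof K ℕ (fun k => ↥(Tpow M k)) i x) t ∈ filt M (i+n) := by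
    intro i x n t ht
    refine filt_induction
      (C := fun t => μq (DirectSum.lof K ℕ (fun k => ↥(Tpow M k)) i x) t ∈ filt M (i+n)) ht
      (fun k hk y => ?_) ?_ (fun a b ha hb => ?_)
    · erw [hμq]
      refine filt_mono (show i+k+1 ≤ i+n by omega) ?_
      exact hJ1 i k _
    · rw [map_zero]
      exact zero_mem _
    · rw [map_add]
      exact add_mem ha hb
  -- the main induction on the list
  have main : ∀ L : List (Σ n : ℕ, ↥(Tpow M n)),
      (foldProd μs L ∈ LinearMap.range
        (DirectSum.lof K ℕ (fun k => ↥(Tpow M k)) ((L.map Sigma.fst).sum))) ∧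
      foldProd μq L - foldProd μs L ∈ filt M ((L.map Sigma.fst).sum) := by
    intro L
    induction L with
    | nil =>
        constructor
        · exact ⟨_, rfl⟩
        · simp only [foldProd]
          erw [sub_self]
          exact zero_mem _
    | cons p L ih =>
        obtain ⟨ihh, ihd⟩ := ih
        obtain ⟨b, hb⟩ := ihh
        rw [List.map_cons, List.sum_cons]
        constructor
        · show μs _ (foldProd μs L) ∈ _
          rw [← hb, hμs]
          exact hS1 p.1 _ _
        · show μq _ (foldProd μq L) - μs _ (foldProd μs L) ∈ _
          have hsplit : μq (DirectSum.lof K ℕ (fun k => ↥(Tpow M k)) p.1 p.2) (foldProd μq L)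
              - μs (DirectSum.lof K ℕ (fun k => ↥(Tpow M k)) p.1 p.2) (foldProd μs L)
              = μq (DirectSum.lof K ℕ (fun k => ↥(Tpow M k)) p.1 p.2)
                  (foldProd μq L - foldProd μs L)
                + (μq (DirectSum.lof K ℕ (fun k => ↥(Tpow M k)) p.1 p.2) (foldProd μs L)
                  - μs (DirectSum.lof K ℕ (fun k => ↥(Tpow M k)) p.1 p.2) (foldProd μs L)) := by
            rw [map_sub]
            abel
          rw [hsplit]
          refine add_mem ?_ ?_
          · exact hmul p.1 p.2 _ _ ihd
          · rw [← hb, hμq, hμs]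
            exact hD p.1 _ _
  intro L _ _
  exact (main L).2
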